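/- arXiv:1601.07096 — 5 statements merged into one kernel-verified Lean document; each statement's English description precedes it below -/
import Mathlib

section
/- Let (f,g): (Ã,B̃,α̃) → (A,B,α) be a morphism of crossed modules with α̃ surjective, and let (φ,X,ω) be a lifting of (A,B,α). Then there exists a unique group morphism g̃: B̃ → X such that (f,g̃) is a morphism of crossed modules from (Ã,B̃,α̃) to (A,X,φ) and ωg̃ = g, if and only if f(Ker α̃) ⊆ Ker φ. -/
/-- A crossed module `(A, B, α)`: groups `A`, `B`, an action of `B` on `A` by
automorphisms, and a homomorphism `α : A →* B` satisfying CM1 and CM2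
(written multiplicatively). -/
structure IsCrossedModule {A B : Type*} [Group A] [Group B]
    (act : B → A → A) (α : A →* B) : Prop where
  act_one : ∀ a, act 1 a = a
  act_mul : ∀ b b' a, act (b * b') a = act b (act b' a)
  act_map_mul : ∀ b a a', act b (a * a') = act b a * act b a'
  cm1 : ∀ b a, α (act b a) = b * α a * b⁻¹
  cm2 : ∀ a a₁, act (α a) a₁ = a * a₁ * a⁻¹

/-- `(φ, X, ω)` is a lifting of the crossed module `(A, B, α)` (with action `act`):
`(A, X, φ)` is a crossed module with `X` acting on `A` via `ω`, and `ω ∘ φ = α`. -/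
def IsLifting {A B X : Type*} [Group A] [Group B] [Group X]
    (act : B → A → A) (α : A →* B) (ω : X →* B) (φ : A →* X) : Prop :=
  IsCrossedModule (fun x a => act (ω x) a) φ ∧ ω.comp φ = α

/-- given a morphism `(f, g)` of crossed modules from a transitive
crossed module `(A', B', α')` (`α'` surjective) to `(A, B, α)`, and a lifting
`(φ, X, ω)` of `(A, B, α)`, there is a unique morphism of crossed modules
`(f, g')` from `(A', B', α')` to `(A, X, φ)` with `ω ∘ g' = g` iff
`f (Ker α') ⊆ Ker φ`. -/
theorem lifting_morphism_existence_iff {A' B' A B X : Type*}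
    [Group A'] [Group B'] [Group A] [Group B] [Group X]
    (act' : B' → A' → A') (α' : A' →* B') (h' : IsCrossedModule act' α')
    (act : B → A → A) (α : A →* B) (h : IsCrossedModule act α)
    (f : A' →* A) (g : B' →* B)
    (hmor1 : g.comp α' = α.comp f)
    (hmor2 : ∀ (b : B') (a : A'), f (act' b a) = act (g b) (f a))
    (hsurj : Function.Surjective α')
    (ω : X →* B) (φ : A →* X) (hl : IsLifting act α ω φ) :
    (∃! g' : B' →* X,
        (g'.comp α' = φ.comp f ∧
          ∀ (b : B') (a : A'), f (act' b a) = act (ω (g' b)) (f a)) ∧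
        ω.comp g' = g) ↔
      α'.ker.map f ≤ φ.ker := by
  constructor
  · rintro ⟨g', ⟨⟨hc, _⟩, _⟩, _⟩ x hx
    obtain ⟨a, ha, rfl⟩ := hx
    have h1 : g' (α' a) = φ (f a) := DFunLike.congr_fun hc a
    rw [MonoidHom.mem_ker.mp ha, map_one] at h1
    exact MonoidHom.mem_ker.mpr h1.symm
  · intro hker
    have wd : ∀ a a' : A', α' a = α' a' → φ (f a) = φ (f a') := by
      intro a a' hab
      have h1 : a * a'⁻¹ ∈ α'.ker := by
        simp [MonoidHom.mem_ker, hab]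
      have h2 := MonoidHom.mem_ker.mp (hker ⟨_, h1, rfl⟩)
      simp only [map_mul, map_inv] at h2
      exact mul_inv_eq_one.mp h2
    choose s hs using hsurj
    have hgw : ∀ b, ω (φ (f (s b))) = g b := by
      intro b
      have h1 : ω (φ (f (s b))) = α (f (s b)) := DFunLike.congr_fun hl.2 (f (s b))
      have h2 : g (α' (s b)) = α (f (s b)) := DFunLike.congr_fun hmor1 (s b)
      rw [h1, ← h2, hs]
    refine ⟨{ toFun := fun b => φ (f (s b)), map_one' := ?_, map_mul' := ?_ },
      ⟨⟨?_, ?_⟩, ?_⟩, ?_⟩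
    · have := wd (s 1) 1 (by rw [hs, map_one])
      simpa using this
    · intro b b'
      have := wd (s (b * b')) (s b * s b') (by rw [hs, map_mul, hs, hs])
      simpa using this
    · ext a
      exact wd (s (α' a)) a (hs _)
    · intro b a
      simp only [MonoidHom.coe_mk, OneHom.coe_mk]
      rw [hgw b]
      exact hmor2 b a
    · ext b
      exact hgw b
    · intro y ⟨⟨hy1, _⟩, _⟩
      ext b
      have : y (α' (s b)) = φ (f (s b)) := DFunLike.congr_fun hy1 (s b)
      rw [hs] at this
      exact this
end

section
/- Let (A,B,α) be a crossed module and let (φ,X,ω) and (φ̃,X̃,ω̃) be two liftings of (A,B,α) such that φ̃ is surjective. Then there exists a morphism of liftings from (φ̃,X̃,ω̃) to (φ,X,ω) (a group morphism f: X̃ → X with fφ̃ = φ and ωf = ω̃) if and only if Ker φ̃ ⊆ Ker φ. -/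
/-- let `(φ, X, ω)` and `(φ', X', ω')` be liftings of `(A, B, α)`
with `φ'` surjective (so `(A, X', φ')` is transitive). Then there is a morphism of
liftings from `(φ', X', ω')` to `(φ, X, ω)` iff `Ker φ' ⊆ Ker φ`. -/
theorem lifting_morphism_iff_ker_le {A B X X' : Type*}
    [Group A] [Group B] [Group X] [Group X']
    (act : B → A → A) (α : A →* B) (h : IsCrossedModule act α)
    (ω : X →* B) (φ : A →* X) (hl : IsLifting act α ω φ)
    (ω' : X' →* B) (φ' : A →* X') (hl' : IsLifting act α ω' φ')
    (hsurj : Function.Surjective φ') :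
    (∃ f : X' →* X, f.comp φ' = φ ∧ ω.comp f = ω') ↔ φ'.ker ≤ φ.ker := by
  constructor
  · rintro ⟨f, hf, -⟩ a ha
    have : φ a = f (φ' a) := by rw [← hf]; rfl
    simp only [MonoidHom.mem_ker] at ha ⊢
    rw [this, ha, map_one]
  · intro hker
    set g := Function.surjInv hsurj with hg
    have hgs : ∀ x, φ' (g x) = x := Function.surjInv_eq hsurj
    have key : ∀ a b : A, φ' a = φ' b → φ a = φ b := by
      intro a b hab
      have : a * b⁻¹ ∈ φ'.ker := by
        simp [MonoidHom.mem_ker, hab]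
      have := hker this
      simp only [MonoidHom.mem_ker, map_mul, map_inv] at this
      rwa [mul_inv_eq_one] at this
    refine ⟨{ toFun := fun x => φ (g x),
              map_one' := ?_, map_mul' := ?_ }, ?_, ?_⟩
    · have : φ (g 1) = φ 1 := key _ _ (by rw [hgs, map_one])
      simpa using this
    · intro x y
      have : φ (g (x * y)) = φ (g x * g y) := key _ _ (by simp [hgs])
      simpa using this
    · ext a
      exact key _ _ (hgs _)
    · ext x
      have h1 : ω.comp φ = α := hl.2
      have h2 : ω'.comp φ' = α := hl'.2
      have : ω (φ (g x)) = ω' (φ' (g x)) := by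
        have e1 : ω (φ (g x)) = α (g x) := by rw [← h1]; rfl
        have e2 : ω' (φ' (g x)) = α (g x) := by rw [← h2]; rfl
        rw [e1, e2]
      simpa [hgs] using this
end

section
/- Let (A,B,α) be a crossed module and let (φ,X,ω) and (φ̃,X̃,ω̃) be two liftings of (A,B,α) with both φ and φ̃ surjective. Then the liftings are isomorphic (there is a group isomorphism f: X → X̃ with fφ = φ̃ and ω̃f = ω) if and only if Ker φ = Ker φ̃. -/
/-- two transitive liftings `(φ, X, ω)` and `(φ', X', ω')` of
`(A, B, α)` (both `φ` and `φ'` surjective) are isomorphic iff `Ker φ = Ker φ'`. -/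
theorem lifting_iso_iff_ker_eq {A B X X' : Type*}
    [Group A] [Group B] [Group X] [Group X']
    (act : B → A → A) (α : A →* B) (h : IsCrossedModule act α)
    (ω : X →* B) (φ : A →* X) (hl : IsLifting act α ω φ)
    (ω' : X' →* B) (φ' : A →* X') (hl' : IsLifting act α ω' φ')
    (hsurj : Function.Surjective φ) (hsurj' : Function.Surjective φ') :
    (∃ f : X ≃* X', (∀ a : A, f (φ a) = φ' a) ∧ ∀ x : X, ω' (f x) = ω x) ↔
      φ.ker = φ'.ker := by
  constructor
  · rintro ⟨f, hf, -⟩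
    ext a
    simp only [MonoidHom.mem_ker]
    constructor
    · intro ha
      have : f (φ a) = f 1 := by rw [ha]
      rw [hf, map_one] at this; exact this
    · intro ha
      have : f (φ a) = 1 := by rw [hf, ha]
      have := this.trans (map_one f).symm
      exact f.injective this
  · intro hker
    have key : ∀ a b : A, φ a = φ b → φ' a = φ' b := by
      intro a b hab
      have : a * b⁻¹ ∈ φ.ker := by
        simp [MonoidHom.mem_ker, hab]
      rw [hker, MonoidHom.mem_ker, map_mul, map_inv] at this
      have := mul_inv_eq_one.mp this
      exact this
    have key' : ∀ a b : A, φ' a = φ' b → φ a = φ b := by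
      intro a b hab
      have : a * b⁻¹ ∈ φ'.ker := by
        simp [MonoidHom.mem_ker, hab]
      rw [← hker, MonoidHom.mem_ker, map_mul, map_inv] at this
      exact mul_inv_eq_one.mp this
    -- choice functions
    let c : X → A := fun x => Classical.choose (hsurj x)
    have hc : ∀ x, φ (c x) = x := fun x => Classical.choose_spec (hsurj x)
    let d : X' → A := fun x' => Classical.choose (hsurj' x')
    have hd : ∀ x', φ' (d x') = x' := fun x' => Classical.choose_spec (hsurj' x')
    let f : X → X' := fun x => φ' (c x)
    let g : X' → X := fun x' => φ (d x')
    have hfφ : ∀ a : A, f (φ a) = φ' a := by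
      intro a
      exact key _ _ (hc (φ a))
    have hgφ : ∀ a : A, g (φ' a) = φ a := by
      intro a
      exact key' _ _ (hd (φ' a))
    have hleft : ∀ x, g (f x) = x := by
      intro x
      show g (φ' (c x)) = x
      rw [hgφ, hc]
    have hright : ∀ x', f (g x') = x' := by
      intro x'
      show f (φ (d x')) = x'
      rw [hfφ, hd]
    have hmul : ∀ x y : X, f (x * y) = f x * f y := by
      intro x y
      show φ' (c (x * y)) = φ' (c x) * φ' (c y)
      rw [← map_mul]
      apply key
      rw [hc, map_mul, hc, hc]
    refine ⟨⟨⟨f, g, hleft, hright⟩, hmul⟩, hfφ, ?_⟩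
    intro x
    show ω' (φ' (c x)) = ω x
    have h1 : ω'.comp φ' = α := hl'.2
    have h2 : ω.comp φ = α := hl.2
    have e1 : ω' (φ' (c x)) = α (c x) := by rw [← h1]; rfl
    have e2 : ω (φ (c x)) = α (c x) := by rw [← h2]; rfl
    rw [e1, ← e2, hc]
end

section
/- Let G be a group-groupoid (an internal groupoid in the category of groups) with source map d₀, target map d₁ and object group Ob(G). Let A = Ker d₀ ⊆ G and B = Ob(G). Then with the action of B on A given by b·a := 1_b + a − 1_b, the restriction d₁: A → B is a crossed module, i.e. d₁(b·a) = b + d₁(a) − b and d₁(a)·a₁ = a + a₁ − a for all a,a₁ ∈ A, b ∈ B. -/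
/-- A group-groupoid: a groupoid whose object set `O` and morphism set `G` are
groups and all structure maps (source `d₀`, target `d₁`, identity `ι`,
composition `comp`, groupoid inverse `ginv`) are compatible with the group
structure; in particular the interchange law holds. -/
structure GroupGroupoid (O G : Type*) [Group O] [Group G] where
  d₀ : G →* O
  d₁ : G →* O
  ι : O →* G
  comp : ∀ (g h : G), d₀ g = d₁ h → G
  ginv : G → G
  d₀_ι : ∀ b, d₀ (ι b) = b
  d₁_ι : ∀ b, d₁ (ι b) = b
  d₀_comp : ∀ (g h : G) (hc : d₀ g = d₁ h), d₀ (comp g h hc) = d₀ h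
  d₁_comp : ∀ (g h : G) (hc : d₀ g = d₁ h), d₁ (comp g h hc) = d₁ g
  id_comp : ∀ (g : G) (hc : d₀ (ι (d₁ g)) = d₁ g), comp (ι (d₁ g)) g hc = g
  comp_id : ∀ (g : G) (hc : d₀ g = d₁ (ι (d₀ g))), comp g (ι (d₀ g)) hc = g
  d₀_ginv : ∀ g, d₀ (ginv g) = d₁ g
  d₁_ginv : ∀ g, d₁ (ginv g) = d₀ g
  comp_ginv : ∀ (g : G) (hc : d₀ g = d₁ (ginv g)), comp g (ginv g) hc = ι (d₁ g)
  ginv_comp : ∀ (g : G) (hc : d₀ (ginv g) = d₁ g), comp (ginv g) g hc = ι (d₀ g)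
  comp_assoc : ∀ (g h k : G) (hgh : d₀ g = d₁ h) (hhk : d₀ h = d₁ k)
    (h₁ : d₀ (comp g h hgh) = d₁ k) (h₂ : d₀ g = d₁ (comp h k hhk)),
    comp (comp g h hgh) k h₁ = comp g (comp h k hhk) h₂
  interchange : ∀ (g h g' h' : G) (hgh : d₀ g = d₁ h) (hg'h' : d₀ g' = d₁ h')
    (hc : d₀ (g * g') = d₁ (h * h')),
    comp g h hgh * comp g' h' hg'h' = comp (g * g') (h * h') hc


section Aux
variable {O G : Type*} [Group O] [Group G] (GG : GroupGroupoid O G)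

lemma GroupGroupoid.comp_congr (g h h' : G) (hc : GG.d₀ g = GG.d₁ h)
    (hc' : GG.d₀ g = GG.d₁ h') (e : h = h') :
    GG.comp g h hc = GG.comp g h' hc' := by subst e; rfl

/-- `comp g 1 = g` when the source of `g` is `1`. -/
lemma GroupGroupoid.comp_one' (g : G) (hg : GG.d₀ g = 1)
    (hc : GG.d₀ g = GG.d₁ 1) : GG.comp g 1 hc = g := by
  have h : GG.ι (GG.d₀ g) = (1 : G) := by rw [hg, map_one]
  have e : GG.comp g 1 hc = GG.comp g (GG.ι (GG.d₀ g))
      (by rw [h]; exact hc) := GG.comp_congr g _ _ _ _ h.symm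
  rw [e]
  exact GG.comp_id g _

/-- In a group-groupoid, composition is determined by the group structure. -/
lemma GroupGroupoid.comp_eq (g h : G) (hc : GG.d₀ g = GG.d₁ h) :
    GG.comp g h hc = g * (GG.ι (GG.d₁ h))⁻¹ * h := by
  have h1 : GG.d₀ (g * (GG.ι (GG.d₁ h))⁻¹) = GG.d₁ (1 : G) := by
    simp [map_mul, GG.d₀_ι, hc]
  have h2 : GG.d₀ (GG.ι (GG.d₁ h)) = GG.d₁ h := GG.d₀_ι _
  have h3 : GG.d₀ ((g * (GG.ι (GG.d₁ h))⁻¹) * GG.ι (GG.d₁ h)) = GG.d₁ ((1:G) * h) := by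
    simp [map_mul, hc]
  have := GG.interchange (g * (GG.ι (GG.d₁ h))⁻¹) 1 (GG.ι (GG.d₁ h)) h h1 h2 h3
  rw [GG.comp_one' _ (by simp [map_mul, GG.d₀_ι, hc]), GG.id_comp h] at this
  rw [this]
  congr 1 <;> group

end Aux

/-- for a group-groupoid with source `d₀`, target `d₁` and object
group `O`, the action of `O` on `A = Ker d₀` by `b • a = ι b * a * (ι b)⁻¹`
preserves `Ker d₀` and the restriction of `d₁` to `Ker d₀` is a crossed module:
`d₁ (b • a) = b * d₁ a * b⁻¹` (CM1) and `(d₁ a) • a₁ = a * a₁ * a⁻¹` (CM2). -/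
theorem groupGroupoid_gives_crossedModule {O G : Type*} [Group O] [Group G]
    (GG : GroupGroupoid O G) :
    (∀ (b : O) (a : G), GG.d₀ a = 1 → GG.d₀ (GG.ι b * a * (GG.ι b)⁻¹) = 1) ∧
    (∀ (b : O) (a : G), GG.d₀ a = 1 →
      GG.d₁ (GG.ι b * a * (GG.ι b)⁻¹) = b * GG.d₁ a * b⁻¹) ∧
    (∀ (a a₁ : G), GG.d₀ a = 1 → GG.d₀ a₁ = 1 →
      GG.ι (GG.d₁ a) * a₁ * (GG.ι (GG.d₁ a))⁻¹ = a * a₁ * a⁻¹) := by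
  refine ⟨?_, ?_, ?_⟩
  · intro b a ha
    simp [map_mul, map_inv, GG.d₀_ι, ha]
  · intro b a ha
    simp [map_mul, map_inv, GG.d₁_ι]
  · intro a a₁ ha ha₁
    have h1 : GG.d₀ (GG.ι (GG.d₁ a)) = GG.d₁ a := GG.d₀_ι _
    have h2 : GG.d₀ a₁ = GG.d₁ (1 : G) := by simp [ha₁]
    have h3 : GG.d₀ (GG.ι (GG.d₁ a) * a₁) = GG.d₁ (a * 1) := by
      simp [map_mul, GG.d₀_ι, ha₁]
    have key := GG.interchange (GG.ι (GG.d₁ a)) a a₁ 1 h1 h2 h3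
    rw [GG.id_comp a, GG.comp_one' a₁ ha₁ h2, GG.comp_eq] at key
    simp only [mul_one, map_mul] at key
    -- key : a * a₁ = ι (d₁ a) * a₁ * (ι (d₁ (a)))⁻¹ * a
    have := key.symm
    calc GG.ι (GG.d₁ a) * a₁ * (GG.ι (GG.d₁ a))⁻¹
        = (GG.ι (GG.d₁ a) * a₁ * (GG.ι (GG.d₁ a))⁻¹ * a) * a⁻¹ := by group
      _ = (a * a₁) * a⁻¹ := by rw [this]
      _ = a * a₁ * a⁻¹ := rfl
end

section
/- Let (A,B,α) be a crossed module. Define on the semidirect product A ⋊ B (with (a₁,b₁)+(a,b) = (a₁ + b₁·a, b₁ + b)) the maps d₀(a,b) = b, d₁(a,b) = α(a) + b, and composition (a₁,b₁)∘(a,b) = (a₁ + a, b) whenever b₁ = α(a) + b. Then this defines a groupoid with object group B on which addition is a functor, i.e. a group-groupoid; in particular the interchange law ((a₁,b₁)∘(a,b)) + ((a₁',b₁')∘(a',b')) = ((a₁,b₁)+(a₁',b₁')) ∘ ((a,b)+(a',b')) holds whenever both composites are defined. -/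
/-- for a crossed module `(A, B, α)`, the semidirect product `A ⋊ B`
with multiplication `(a₁, b₁) * (a, b) = (a₁ * b₁ • a, b₁ * b)`, source
`d₀ (a, b) = b`, target `d₁ (a, b) = α a * b` and composition
`(a₁, b₁) ∘ (a, b) = (a₁ * a, b)` (defined when `b₁ = α a * b`) is a
group-groupoid: `d₁` is a group homomorphism and the interchange law
`((a₁,b₁) ∘ (a,b)) * ((a₁',b₁') ∘ (a',b')) = ((a₁,b₁) * (a₁',b₁')) ∘ ((a,b) * (a',b'))`
holds whenever both composites are defined (stated componentwise after
substituting `b₁ = α a * b` and `b₁' = α a' * b'`; the second components of both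
sides are `b * b'`, so only the first components and the composability of the
products are recorded). -/
theorem crossedModule_gives_groupGroupoid {A B : Type*} [Group A] [Group B]
    (act : B → A → A) (α : A →* B) (h : IsCrossedModule act α) :
    -- `d₁` is a group homomorphism on `A ⋊ B`:
    (∀ (a a' : A) (b b' : B),
      α (a * act b a') * (b * b') = (α a * b) * (α a' * b')) ∧
    -- the product of two composable pairs is composable:
    (∀ (a a' : A) (b b' : B),
      (α a * b) * (α a' * b') = α (a * act b a') * (b * b')) ∧
    -- the interchange law (first components; second components are `b * b'`):
    (∀ (a₁ a a₁' a' : A) (b b' : B),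
      (a₁ * act (α a * b) a₁') * (a * act b a') = (a₁ * a) * act b (a₁' * a')) := by
  have h1 : ∀ (a a' : A) (b b' : B),
      α (a * act b a') * (b * b') = (α a * b) * (α a' * b') := by
    intro a a' b b'
    rw [map_mul, h.cm1]
    group
  refine ⟨h1, fun a a' b b' => (h1 a a' b b').symm, ?_⟩
  intro a₁ a a₁' a' b b'
  rw [h.act_mul, h.cm2, h.act_map_mul]
  group
end
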